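/- Let (X, 𝒜, μ) be a q-measure space and let A, B ∈ 𝒜 be arbitrary. Then ∫ (χ_A + χ_B) dμ = ∫ χ_A dμ + ∫ χ_B dμ if and only if A μ B, i.e. if and only if μ(A ∪ B) = μ(A) + μ(B) − μ(A ∩ B). -/

import Mathlib

open MeasureTheory Set Filter Topology

/-- Grade-2 additivity for a set function on the measurable sets of `X`. -/
def Grade2Additive {X : Type*} [MeasurableSpace X] (μ : Set X → ℝ) : Prop :=
  ∀ A B C : Set X, MeasurableSet A → MeasurableSet B → MeasurableSet C →
    Disjoint A B → Disjoint A C → Disjoint B C →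
    μ (A ∪ B ∪ C) = μ (A ∪ B) + μ (A ∪ C) + μ (B ∪ C) - μ A - μ B - μ C

/-- Continuity of a set function along increasing and decreasing sequences. -/
def QContinuous {X : Type*} [MeasurableSpace X] (μ : Set X → ℝ) : Prop :=
  (∀ A : ℕ → Set X, (∀ i, MeasurableSet (A i)) → Monotone A →
    Tendsto (fun i => μ (A i)) atTop (𝓝 (μ (⋃ i, A i)))) ∧
  (∀ A : ℕ → Set X, (∀ i, MeasurableSet (A i)) → Antitone A →
    Tendsto (fun i => μ (A i)) atTop (𝓝 (μ (⋂ i, A i))))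

/-- A `q`-measure: a nonnegative, grade-2 additive, continuous set function. -/
structure IsQMeasure {X : Type*} [MeasurableSpace X] (μ : Set X → ℝ) : Prop where
  nonneg : ∀ A : Set X, MeasurableSet A → 0 ≤ μ A
  grade2 : Grade2Additive μ
  cont : QContinuous μ

/-- The `q`-integral:
`∫ f dμ = ∫₀^∞ μ(f⁻¹(λ,∞)) dλ − ∫₀^∞ μ(f⁻¹(−∞,−λ)) dλ`,
the integrals on the right being Lebesgue integrals in `λ`. -/
noncomputable def qIntegral {X : Type*} [MeasurableSpace X]
    (μ : Set X → ℝ) (f : X → ℝ) : ℝ :=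
  (∫ l in Set.Ioi (0 : ℝ), μ (f ⁻¹' Set.Ioi l))
    - ∫ l in Set.Ioi (0 : ℝ), μ (f ⁻¹' Set.Iio (-l))

/-- `f` is `μ`-integrable: `f` is measurable and both Lebesgue integrals defining
the `q`-integral are finite. -/
def QIntegrable {X : Type*} [MeasurableSpace X] (μ : Set X → ℝ) (f : X → ℝ) : Prop :=
  Measurable f ∧
  IntegrableOn (fun l => μ (f ⁻¹' Set.Ioi l)) (Set.Ioi (0 : ℝ)) ∧
  IntegrableOn (fun l => μ (f ⁻¹' Set.Iio (-l))) (Set.Ioi (0 : ℝ))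

/-- Lemma 4.3: for arbitrary measurable `A, B`,
`∫ (χ_A + χ_B) dμ = ∫ χ_A dμ + ∫ χ_B dμ` iff `A` and `B` are `μ`-compatible,
i.e. `μ(A ∪ B) = μ(A) + μ(B) − μ(A ∩ B)`. -/

lemma ind_integral (c₁ c₂ : ℝ) (g : ℝ → ℝ)
    (hg : ∀ l ∈ Set.Ioi (0:ℝ), g l =
      (Set.Ioo (0:ℝ) 1).indicator (fun _ => c₁) l + (Set.Ico (1:ℝ) 2).indicator (fun _ => c₂) l) :
    ∫ l in Set.Ioi (0:ℝ), g l = c₁ + c₂ := by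
  rw [setIntegral_congr_fun measurableSet_Ioi hg]
  have h1 : IntegrableOn ((Set.Ioo (0:ℝ) 1).indicator (fun _ => c₁)) (Set.Ioi (0:ℝ)) :=
    ((integrable_indicator_iff measurableSet_Ioo).2
      (integrableOn_const (by simp))).integrableOn
  have h2 : IntegrableOn ((Set.Ico (1:ℝ) 2).indicator (fun _ => c₂)) (Set.Ioi (0:ℝ)) :=
    ((integrable_indicator_iff measurableSet_Ico).2
      (integrableOn_const (by simp))).integrableOn
  rw [integral_add h1 h2]
  have e1 : ∫ l in Set.Ioi (0:ℝ), (Set.Ioo (0:ℝ) 1).indicator (fun _ => c₁) l = c₁ := by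
    rw [integral_indicator measurableSet_Ioo, Measure.restrict_restrict measurableSet_Ioo,
      Set.inter_eq_self_of_subset_left Set.Ioo_subset_Ioi_self, setIntegral_const]
    simp
  have e2 : ∫ l in Set.Ioi (0:ℝ), (Set.Ico (1:ℝ) 2).indicator (fun _ => c₂) l = c₂ := by
    rw [integral_indicator measurableSet_Ico, Measure.restrict_restrict measurableSet_Ico,
      Set.inter_eq_self_of_subset_left (show Set.Ico (1:ℝ) 2 ⊆ Set.Ioi 0 from fun x hx => lt_of_lt_of_le one_pos hx.1),
      setIntegral_const]
    norm_num
  rw [e1, e2]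

theorem qIntegral_indicator_add_iff {X : Type*} [MeasurableSpace X]
    (μ : Set X → ℝ) (hμ : IsQMeasure μ)
    (A B : Set X) (hA : MeasurableSet A) (hB : MeasurableSet B) :
    qIntegral μ (fun x => Set.indicator A (fun _ => (1 : ℝ)) x
        + Set.indicator B (fun _ => (1 : ℝ)) x) =
      qIntegral μ (Set.indicator A fun _ => (1 : ℝ))
        + qIntegral μ (Set.indicator B fun _ => (1 : ℝ)) ↔
    μ (A ∪ B) = μ A + μ B - μ (A ∩ B) := by
    -- μ of the empty set is 0
  have h0 : μ ∅ = 0 := by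
    have h := hμ.grade2 ∅ ∅ ∅ MeasurableSet.empty MeasurableSet.empty MeasurableSet.empty
      disjoint_bot_left disjoint_bot_left disjoint_bot_left
    simp only [Set.union_empty, Set.empty_union] at h
    linarith
  -- negative parts vanish
  have hneg : ∀ g : X → ℝ, (∀ x, 0 ≤ g x) →
      ∫ l in Set.Ioi (0:ℝ), μ (g ⁻¹' Set.Iio (-l)) = 0 := by
    intro g hg
    have : ∀ l ∈ Set.Ioi (0:ℝ), μ (g ⁻¹' Set.Iio (-l)) = 0 := by
      intro l hl
      simp only [Set.mem_Ioi] at hl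
      have : g ⁻¹' Set.Iio (-l) = ∅ := by
        ext x
        simp only [Set.mem_preimage, Set.mem_Iio, Set.mem_empty_iff_false, iff_false, not_lt]
        linarith [hg x]
      rw [this, h0]
    rw [setIntegral_congr_fun measurableSet_Ioi this, integral_zero]
  have hind_nonneg : ∀ (S : Set X) (x : X), (0:ℝ) ≤ S.indicator (fun _ => (1:ℝ)) x := by
    intro S x
    exact Set.indicator_nonneg (fun _ _ => zero_le_one) x
  -- positive part for a single indicator
  have hsingle : ∀ S : Set X, ∫ l in Set.Ioi (0:ℝ),
      μ (S.indicator (fun _ => (1:ℝ)) ⁻¹' Set.Ioi l) = μ S + 0 := by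
    intro S
    apply ind_integral
    intro l hl
    simp only [Set.mem_Ioi] at hl
    by_cases h1 : l < 1
    · have hp : S.indicator (fun _ => (1:ℝ)) ⁻¹' Set.Ioi l = S := by
        ext x
        by_cases hx : x ∈ S <;>
          simp [Set.indicator_apply, hx, Set.mem_preimage] <;> linarith
      rw [hp, Set.indicator_of_mem (Set.mem_Ioo.mpr ⟨hl, h1⟩),
        Set.indicator_of_notMem (by simp only [Set.mem_Ico, not_and, not_lt]; intro h; linarith)]
      ring
    · have hp : S.indicator (fun _ => (1:ℝ)) ⁻¹' Set.Ioi l = ∅ := by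
        ext x
        by_cases hx : x ∈ S <;>
          simp [Set.indicator_apply, hx, Set.mem_preimage] <;> linarith
      rw [hp, h0, Set.indicator_of_notMem (by simp only [Set.mem_Ioo, not_and, not_lt]; intro; linarith)]
      by_cases h2 : l < 2
      · rw [Set.indicator_of_mem (Set.mem_Ico.mpr ⟨le_of_not_gt h1, h2⟩)]; ring
      · rw [Set.indicator_of_notMem (by simp only [Set.mem_Ico, not_and, not_lt]; intro; linarith)]
        ring
  -- positive part for the sum
  have hsum : ∫ l in Set.Ioi (0:ℝ),
      μ ((fun x => A.indicator (fun _ => (1:ℝ)) x + B.indicator (fun _ => (1:ℝ)) x) ⁻¹' Set.Ioi l)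
        = μ (A ∪ B) + μ (A ∩ B) := by
    apply ind_integral
    intro l hl
    simp only [Set.mem_Ioi] at hl
    by_cases h1 : l < 1
    · have hp : (fun x => A.indicator (fun _ => (1:ℝ)) x + B.indicator (fun _ => (1:ℝ)) x)
          ⁻¹' Set.Ioi l = A ∪ B := by
        ext x
        by_cases ha : x ∈ A <;> by_cases hb : x ∈ B <;>
          simp [Set.indicator_apply, ha, hb, Set.mem_preimage, Set.mem_union] <;> linarith
      rw [hp, Set.indicator_of_mem (Set.mem_Ioo.mpr ⟨hl, h1⟩),
        Set.indicator_of_notMem (by simp only [Set.mem_Ico, not_and, not_lt]; intro; linarith)]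
      ring
    · rw [Set.indicator_of_notMem (by simp only [Set.mem_Ioo, not_and, not_lt]; intro; linarith)]
      by_cases h2 : l < 2
      · have hp : (fun x => A.indicator (fun _ => (1:ℝ)) x + B.indicator (fun _ => (1:ℝ)) x)
            ⁻¹' Set.Ioi l = A ∩ B := by
          ext x
          by_cases ha : x ∈ A <;> by_cases hb : x ∈ B <;>
            simp [Set.indicator_apply, ha, hb, Set.mem_preimage, Set.mem_inter_iff] <;> linarith
        rw [hp, Set.indicator_of_mem (Set.mem_Ico.mpr ⟨le_of_not_gt h1, h2⟩)]
        ring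
      · have hp : (fun x => A.indicator (fun _ => (1:ℝ)) x + B.indicator (fun _ => (1:ℝ)) x)
            ⁻¹' Set.Ioi l = ∅ := by
          ext x
          by_cases ha : x ∈ A <;> by_cases hb : x ∈ B <;>
            simp [Set.indicator_apply, ha, hb, Set.mem_preimage] <;> linarith
        rw [hp, h0,
          Set.indicator_of_notMem (by simp only [Set.mem_Ico, not_and, not_lt]; intro; linarith)]
        ring
  unfold qIntegral
  rw [hsum, hsingle A, hsingle B,
    hneg _ (fun x => add_nonneg (hind_nonneg A x) (hind_nonneg B x)),
    hneg _ (hind_nonneg A), hneg _ (hind_nonneg B)]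
  constructor <;> intro h <;> linarith
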